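/- arXiv:0904.1812 — 5 statements merged into one kernel-verified Lean document; each statement's English description precedes it below -/
import Mathlib

section
/- Let T ≥ M ≥ 1, P = T - M + 1, and let x_p ∈ ℂ^M for p = 1,...,P. Define the T×M matrix C whose (t, j) entry equals (x_p)_j if t = j + p - 1 for some p ∈ {1,...,P}, and 0 otherwise (each vector x_p placed along the p-th descending diagonal). If there exists an index p such that every coordinate of x_p is nonzero and x_q = 0 for all q < p, then C has rank M (full column rank). -/
theorem stmt_2 (M T : ℕ) (hM : 1 ≤ M) (hMT : M ≤ T) (P : ℕ) (hP : P = T - M + 1)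
    (x : Fin P → Fin M → ℂ)
    (C : Matrix (Fin T) (Fin M) ℂ)
    (hC : ∀ (t : Fin T) (j : Fin M),
      C t j = if ht : (j : ℕ) ≤ (t : ℕ) ∧ (t : ℕ) - (j : ℕ) < P
        then x ⟨(t : ℕ) - (j : ℕ), ht.2⟩ j else 0)
    (hx : ∃ p : Fin P, (∀ j : Fin M, x p j ≠ 0) ∧ ∀ q : Fin P, q < p → x q = 0) :
    C.rank = M := by
  obtain ⟨p, hp1, hp2⟩ := hx
  have hpT : ∀ j : Fin M, (p : ℕ) + (j : ℕ) < T := by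
    intro j
    have hpP : (p : ℕ) < P := p.isLt
    have : (p : ℕ) ≤ T - M := by omega
    have := j.isLt
    omega
  set r : Fin M → Fin T := fun j => ⟨(p : ℕ) + (j : ℕ), hpT j⟩ with hr
  set B : Matrix (Fin M) (Fin M) ℂ := C.submatrix r (Equiv.refl (Fin M)) with hB
  have hdiag : ∀ j : Fin M, B j j = x p j := by
    intro j
    have h1 : (j : ℕ) ≤ (p : ℕ) + (j : ℕ) := by omega
    have h2 : (p : ℕ) + (j : ℕ) - (j : ℕ) < P := by
      have := p.isLt; omega
    simp only [hB, Matrix.submatrix_apply, Equiv.refl_apply, hC]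
    rw [dif_pos ⟨h1, h2⟩]
    congr 1
    exact Fin.ext (by simp [hr])
  have htri : ∀ i j : Fin M, i < j → B i j = 0 := by
    intro i j hij
    simp only [hB, Matrix.submatrix_apply, Equiv.refl_apply, hC, hr]
    split
    · rename_i h
      have hji : (j : ℕ) ≤ (p : ℕ) + (i : ℕ) := h.1
      have hlt : (p : ℕ) + (i : ℕ) - (j : ℕ) < (p : ℕ) := by
        have : (i : ℕ) < (j : ℕ) := hij
        omega
      rw [hp2 ⟨(p : ℕ) + (i : ℕ) - (j : ℕ), h.2⟩ hlt]
      simp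
    · rfl
  have hdet : B.det ≠ 0 := by
    rw [Matrix.det_of_lowerTriangular B (by intro i j h; exact htri i j h)]
    exact Finset.prod_ne_zero_iff.mpr fun j _ => by rw [hdiag j]; exact hp1 j
  have hunit : IsUnit B := B.isUnit_iff_isUnit_det.mpr (isUnit_iff_ne_zero.mpr hdet)
  have hinj : Function.Injective C.mulVecLin := by
    intro v w hvw
    have hB : B.mulVec v = B.mulVec w := by
      funext j
      simp only [hB, Matrix.mulVec, dotProduct, Matrix.submatrix_apply,
        Equiv.refl_apply]
      have := congrFun hvw (r j)
      simpa [Matrix.mulVecLin_apply, Matrix.mulVec, dotProduct] using this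
    exact Matrix.mulVec_injective_iff_isUnit.mpr hunit hB
  rw [Matrix.rank, LinearMap.finrank_range_of_inj hinj]
  simp
end

section
/- Let Θ be an M×M complex matrix all of whose entries are nonzero, and let h ∈ ℂ^M with h ≠ 0. Define the (M+1)×M matrices G₁ = [diag(h)·Θ ; 0_{1×M}] (diag(h)·Θ on top, one zero row below) and G₂ = [0_{1×M} ; diag(h)·Θ] (one zero row on top). Then no column of G₁ lies in the column span of G₂, and no column of G₂ lies in the column span of G₁. -/
theorem stmt_3 (M : ℕ) (hM : 1 ≤ M) (Θ : Matrix (Fin M) (Fin M) ℂ)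
    (hΘ : ∀ i j, Θ i j ≠ 0) (h : Fin M → ℂ) (hh : h ≠ 0)
    (G1 G2 : Matrix (Fin (M + 1)) (Fin M) ℂ)
    (hG1 : ∀ (t : Fin (M + 1)) (j : Fin M),
      G1 t j = if ht : (t : ℕ) < M then h ⟨t, ht⟩ * Θ ⟨t, ht⟩ j else 0)
    (hG2 : ∀ (t : Fin (M + 1)) (j : Fin M),
      G2 t j = if ht : 0 < (t : ℕ)
        then h ⟨(t : ℕ) - 1, by have := t.isLt; omega⟩ *
             Θ ⟨(t : ℕ) - 1, by have := t.isLt; omega⟩ j else 0) :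
    (∀ m : Fin M, (fun t => G1 t m) ∉
      Submodule.span ℂ (Set.range fun j : Fin M => fun t => G2 t j)) ∧
    (∀ m : Fin M, (fun t => G2 t m) ∉
      Submodule.span ℂ (Set.range fun j : Fin M => fun t => G1 t j)) := by
  have hne : ∃ i, h i ≠ 0 := by
    by_contra hc; push_neg at hc; exact hh (funext hc)
  obtain ⟨i0, hi0⟩ := hne
  set S : Finset (Fin M) := Finset.univ.filter (fun i => h i ≠ 0) with hS
  have hSne : S.Nonempty := ⟨i0, by simp [hS, hi0]⟩
  have hzero : ∀ i : Fin M, i ∉ S → h i = 0 := by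
    intro i hi; by_contra hci; exact hi (by simp [hS, hci])
  constructor
  · intro m hm
    rw [Submodule.mem_span_range_iff_exists_fun] at hm
    obtain ⟨c, hc⟩ := hm
    set k := S.min' hSne with hk
    have hk0 : h k ≠ 0 := by
      have := S.min'_mem hSne; simpa [hS] using this
    have hkmin : ∀ j : Fin M, (j : ℕ) < (k : ℕ) → h j = 0 := by
      intro j hj
      apply hzero
      intro hjS
      have := S.min'_le j hjS
      rw [Fin.le_def] at this
      omega
    have hkM : (k : ℕ) < M := k.isLt
    have hrow := congrFun hc ⟨(k : ℕ), by omega⟩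
    simp only [Finset.sum_apply, Pi.smul_apply, smul_eq_mul] at hrow
    have hlhs : ∀ j ∈ Finset.univ, c j * G2 ⟨(k : ℕ), by omega⟩ j = 0 := by
      intro j _
      rw [hG2]
      split_ifs with hpos
      · have hpos' : 0 < (k : ℕ) := by simpa using hpos
        rw [hkmin ⟨(k : ℕ) - 1, by omega⟩ (by simp only [Fin.val_mk]; omega)]
        ring
      · ring
    rw [Finset.sum_eq_zero hlhs, hG1, dif_pos (show (((⟨(k : ℕ), by omega⟩ : Fin (M+1))) : ℕ) < M from hkM)] at hrow
    have hkk : (⟨((⟨(k : ℕ), by omega⟩ : Fin (M+1)) : ℕ), hkM⟩ : Fin M) = k := by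
      apply Fin.ext; rfl
    rw [hkk] at hrow
    exact (mul_ne_zero hk0 (hΘ k m)) hrow.symm
  · intro m hm
    rw [Submodule.mem_span_range_iff_exists_fun] at hm
    obtain ⟨c, hc⟩ := hm
    set k := S.max' hSne with hk
    have hk0 : h k ≠ 0 := by
      have := S.max'_mem hSne; simpa [hS] using this
    have hkmax : ∀ j : Fin M, (k : ℕ) < (j : ℕ) → h j = 0 := by
      intro j hj
      apply hzero
      intro hjS
      have := S.le_max' j hjS
      rw [Fin.le_def] at this
      omega
    have hkM : (k : ℕ) < M := k.isLt
    have hrow := congrFun hc ⟨(k : ℕ) + 1, by omega⟩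
    simp only [Finset.sum_apply, Pi.smul_apply, smul_eq_mul] at hrow
    have hlhs : ∀ j ∈ Finset.univ, c j * G1 ⟨(k : ℕ) + 1, by omega⟩ j = 0 := by
      intro j _
      rw [hG1]
      split_ifs with hlt
      · rw [hkmax ⟨(k : ℕ) + 1, hlt⟩ (by simp)]
        ring
      · ring
    rw [Finset.sum_eq_zero hlhs, hG2,
      dif_pos (show 0 < (((⟨(k : ℕ) + 1, by omega⟩ : Fin (M+1))) : ℕ) from Nat.succ_pos _)] at hrow
    have hkk : ∀ (p : (k:ℕ)+1-1 < M), (⟨(k:ℕ)+1-1, p⟩ : Fin M) = k := by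
      intro p; apply Fin.ext; simp
    rw [hkk] at hrow
    exact (mul_ne_zero hk0 (hΘ k m)) hrow.symm
end

section
/- Let h ∈ ℂ⁴ be nonzero and Θ a 4×4 matrix with all entries nonzero. Write g_i = h_i · (row i of Θ) ∈ ℂ^{1×4}. Form the 7×12 matrix H = [G₁ G₂ G₃] with G₁ = [g₁; 0; 0; g₄; 0; g₃; g₂], G₂ = [0; g₂; 0; g₁; g₄; 0; g₃], G₃ = [0; 0; g₃; 0; g₂; g₄; g₁] (each row shown is a 1×4 block). Then each of the three column groups G₁, G₂, G₃ is linearly independent of the other two: no column of G_i is a linear combination of the columns of the other two groups. -/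
private lemma span_eval {n : ℕ} {S : Set (Fin n → ℂ)} {v : Fin n → ℂ}
    (hv : v ∈ Submodule.span ℂ S) (t : Fin n) (hS : ∀ w ∈ S, w t = 0) : v t = 0 := by
  have hle : Submodule.span ℂ S ≤ LinearMap.ker (LinearMap.proj t : (Fin n → ℂ) →ₗ[ℂ] ℂ) :=
    Submodule.span_le.mpr fun w hw => LinearMap.mem_ker.mpr (hS w hw)
  exact hle hv

private lemma cons_val_five' {α : Type*} {n : ℕ} (x : α) (u : Fin (n+5) → α) :
    Matrix.vecCons x u 5 = u 4 := rfl

private lemma cons_val_six' {α : Type*} {n : ℕ} (x : α) (u : Fin (n+6) → α) :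
    Matrix.vecCons x u 6 = u 5 := rfl

theorem stmt_11 (h : Fin 4 → ℂ) (hh : h ≠ 0)
    (Θ : Matrix (Fin 4) (Fin 4) ℂ) (hΘ : ∀ i j, Θ i j ≠ 0)
    (g : Fin 4 → Fin 4 → ℂ) (hg : ∀ i j, g i j = h i * Θ i j)
    (G1 G2 G3 : Matrix (Fin 7) (Fin 4) ℂ)
    (hG1 : G1 = Matrix.of ![g 0, 0, 0, g 3, 0, g 2, g 1])
    (hG2 : G2 = Matrix.of ![0, g 1, 0, g 0, g 3, 0, g 2])
    (hG3 : G3 = Matrix.of ![0, 0, g 2, 0, g 1, g 3, g 0]) :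
    (∀ m : Fin 4, (fun t => G1 t m) ∉ Submodule.span ℂ
      ((Set.range fun j : Fin 4 => fun t => G2 t j) ∪
       (Set.range fun j : Fin 4 => fun t => G3 t j))) ∧
    (∀ m : Fin 4, (fun t => G2 t m) ∉ Submodule.span ℂ
      ((Set.range fun j : Fin 4 => fun t => G1 t j) ∪
       (Set.range fun j : Fin 4 => fun t => G3 t j))) ∧
    (∀ m : Fin 4, (fun t => G3 t m) ∉ Submodule.span ℂ
      ((Set.range fun j : Fin 4 => fun t => G1 t j) ∪
       (Set.range fun j : Fin 4 => fun t => G2 t j))) := by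
  subst hG1 hG2 hG3
  have hzero : ∀ i : Fin 4, (∃ m, g i m = 0) → h i = 0 := by
    rintro i ⟨m, hm⟩
    rw [hg] at hm
    rcases mul_eq_zero.mp hm with h' | h'
    · exact h'
    · exact absurd h' (hΘ i m)
  refine ⟨?_, ?_, ?_⟩
  · intro m hmem
    have e0 : g 0 m = 0 := by
      have := span_eval hmem 0 ?_
      · simpa using this
      · rintro w (⟨j, rfl⟩ | ⟨j, rfl⟩) <;> simp
    have h0 : h 0 = 0 := hzero 0 ⟨m, e0⟩
    have e3 : g 3 m = 0 := by
      have := span_eval hmem 3 ?_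
      · simpa using this
      · rintro w (⟨j, rfl⟩ | ⟨j, rfl⟩) <;> simp [cons_val_five', cons_val_six', Matrix.vecHead, Matrix.vecTail, hg, h0]
    have h3 : h 3 = 0 := hzero 3 ⟨m, e3⟩
    have e5 : g 2 m = 0 := by
      have := span_eval hmem 5 ?_
      · simpa using this
      · rintro w (⟨j, rfl⟩ | ⟨j, rfl⟩) <;> simp [cons_val_five', cons_val_six', Matrix.vecHead, Matrix.vecTail, hg, h3]
    have h2 : h 2 = 0 := hzero 2 ⟨m, e5⟩
    have e6 : g 1 m = 0 := by
      have := span_eval hmem 6 ?_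
      · simpa using this
      · rintro w (⟨j, rfl⟩ | ⟨j, rfl⟩) <;> simp [cons_val_five', cons_val_six', Matrix.vecHead, Matrix.vecTail, hg, h0, h2]
    have h1 : h 1 = 0 := hzero 1 ⟨m, e6⟩
    exact hh (funext fun i => by fin_cases i <;> assumption)
  · intro m hmem
    have e1 : g 1 m = 0 := by
      have := span_eval hmem 1 ?_
      · simpa using this
      · rintro w (⟨j, rfl⟩ | ⟨j, rfl⟩) <;> simp
    have h1 : h 1 = 0 := hzero 1 ⟨m, e1⟩
    have e4 : g 3 m = 0 := by
      have := span_eval hmem 4 ?_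
      · simpa using this
      · rintro w (⟨j, rfl⟩ | ⟨j, rfl⟩) <;> simp [cons_val_five', cons_val_six', Matrix.vecHead, Matrix.vecTail, hg, h1]
    have h3 : h 3 = 0 := hzero 3 ⟨m, e4⟩
    have e3 : g 0 m = 0 := by
      have := span_eval hmem 3 ?_
      · simpa using this
      · rintro w (⟨j, rfl⟩ | ⟨j, rfl⟩) <;> simp [cons_val_five', cons_val_six', Matrix.vecHead, Matrix.vecTail, hg, h3]
    have h0 : h 0 = 0 := hzero 0 ⟨m, e3⟩
    have e6 : g 2 m = 0 := by
      have := span_eval hmem 6 ?_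
      · simpa using this
      · rintro w (⟨j, rfl⟩ | ⟨j, rfl⟩) <;> simp [cons_val_five', cons_val_six', Matrix.vecHead, Matrix.vecTail, hg, h0, h1]
    have h2 : h 2 = 0 := hzero 2 ⟨m, e6⟩
    exact hh (funext fun i => by fin_cases i <;> assumption)
  · intro m hmem
    have e2 : g 2 m = 0 := by
      have := span_eval hmem 2 ?_
      · simpa using this
      · rintro w (⟨j, rfl⟩ | ⟨j, rfl⟩) <;> simp
    have h2 : h 2 = 0 := hzero 2 ⟨m, e2⟩
    have e5 : g 3 m = 0 := by
      have := span_eval hmem 5 ?_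
      · simpa using this
      · rintro w (⟨j, rfl⟩ | ⟨j, rfl⟩) <;> simp [cons_val_five', cons_val_six', Matrix.vecHead, Matrix.vecTail, hg, h2]
    have h3 : h 3 = 0 := hzero 3 ⟨m, e5⟩
    have e4 : g 1 m = 0 := by
      have := span_eval hmem 4 ?_
      · simpa using this
      · rintro w (⟨j, rfl⟩ | ⟨j, rfl⟩) <;> simp [cons_val_five', cons_val_six', Matrix.vecHead, Matrix.vecTail, hg, h3]
    have h1 : h 1 = 0 := hzero 1 ⟨m, e4⟩
    have e6 : g 0 m = 0 := by
      have := span_eval hmem 6 ?_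
      · simpa using this
      · rintro w (⟨j, rfl⟩ | ⟨j, rfl⟩) <;> simp [cons_val_five', cons_val_six', Matrix.vecHead, Matrix.vecTail, hg, h1, h2]
    have h0 : h 0 = 0 := hzero 0 ⟨m, e6⟩
    exact hh (funext fun i => by fin_cases i <;> assumption)
end

section
/- Let M = 3p, h ∈ ℂ^M nonzero, Θ an M×M matrix with all entries nonzero, and g_i = h_i·(row i of Θ). Consider the three column groups G₁, G₂, G₃ of the equivalent channel matrix H of the code C_{3p} (as in equation (27) of the paper). Then reordering h as (h₁, h₄, ..., h_{3p-2}, h_{3p}, h_{3p-3}, ..., h₃, h₂, h₅, ..., h_{3p-1}) and taking the first index j in this sequence with h_j ≠ 0, the row of H containing g_j in group G₁ has all entries in groups G₂ and G₃ equal to zero; consequently G₁ is not contained in the span of the columns of G₂ and G₃. -/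
/-- Row `r` of the first column group `G₁` of the equivalent channel matrix of
the code `C_{3p}` (rows indexed by naturals, `0`-based). -/
noncomputable def G1row (p : ℕ) (g : ℕ → Fin (3 * p) → ℂ) (r : ℕ) : Fin (3 * p) → ℂ :=
  if r < 3 * p then
    (if r % 3 = 0 then g r
     else if r % 3 = 1 then 0
     else if r / 3 = 0 then 0 else g (3 * (r / 3) - 1))
  else if r = 3 * p then g 1
  else if r = 3 * p + 1 then 0
  else if r = 3 * p + 2 then g (3 * p - 1)
  else g (3 * (r - (3 * p + 3)) + 4)

/-- Row `r` of the second column group `G₂`. -/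
noncomputable def G2row (p : ℕ) (g : ℕ → Fin (3 * p) → ℂ) (r : ℕ) : Fin (3 * p) → ℂ :=
  if r < 3 * p then
    (if r % 3 = 0 then (if r / 3 = 0 then 0 else g (3 * (r / 3) - 3))
     else if r % 3 = 1 then g r
     else 0)
  else if r = 3 * p then g (3 * p - 3)
  else if r = 3 * p + 1 then g 2
  else if r = 3 * p + 2 then 0
  else g (3 * (r - (3 * p + 3)) + 5)

/-- Row `r` of the third column group `G₃`. -/
noncomputable def G3row (p : ℕ) (g : ℕ → Fin (3 * p) → ℂ) (r : ℕ) : Fin (3 * p) → ℂ :=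
  if r < 3 * p then
    (if r % 3 = 0 then 0
     else if r % 3 = 1 then (if r / 3 = 0 then 0 else g (3 * (r / 3) - 2))
     else g r)
  else if r = 3 * p then 0
  else if r = 3 * p + 1 then g (3 * p - 2)
  else if r = 3 * p + 2 then g 0
  else g (3 * (r - (3 * p + 3)) + 3)

/-- The reordering `(h₁,h₄,…,h_{3p-2}, h_{3p},h_{3p-3},…,h₃, h₂,h₅,…,h_{3p-1})`
of the channel coefficients (`0`-based indices). -/
def reorder (p k : ℕ) : ℕ :=
  if k < p then 3 * k
  else if k < 2 * p then 3 * p - 1 - 3 * (k - p)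
  else 3 * (k - 2 * p) + 1

theorem stmt_12 (p : ℕ) (hp : 1 ≤ p) (h : Fin (3 * p) → ℂ) (hh : h ≠ 0)
    (Θ : Matrix (Fin (3 * p)) (Fin (3 * p)) ℂ) (hΘ : ∀ i j, Θ i j ≠ 0)
    (g : ℕ → Fin (3 * p) → ℂ)
    (hg : ∀ n : ℕ, g n = if hn : n < 3 * p
      then (fun j => h ⟨n, hn⟩ * Θ ⟨n, hn⟩ j) else 0)
    (k0 : ℕ) (hk0 : k0 < 3 * p)
    (j : ℕ) (hj : j = reorder p k0) (hjlt : j < 3 * p)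
    (hjne : h ⟨j, hjlt⟩ ≠ 0)
    (hprev : ∀ k, k < k0 → ∀ hlt : reorder p k < 3 * p, h ⟨reorder p k, hlt⟩ = 0) :
    (∃ r : ℕ, r < 4 * p + 2 ∧ G1row p g r = g j ∧ G2row p g r = 0 ∧ G3row p g r = 0) ∧
    (∀ m : Fin (3 * p), (fun t : Fin (4 * p + 2) => G1row p g t m) ∉
      Submodule.span ℂ
        ((Set.range fun c : Fin (3 * p) => fun t : Fin (4 * p + 2) => G2row p g t c) ∪
         (Set.range fun c : Fin (3 * p) => fun t : Fin (4 * p + 2) => G3row p g t c))) := by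
  have hgz : ∀ n, ∀ hn : n < 3 * p, h ⟨n, hn⟩ = 0 → g n = 0 := by
    intro n hn hzero
    rw [hg, dif_pos hn]
    funext j'
    simp [hzero]
  have hz : ∀ n, ∀ hn : n < 3 * p, (∃ k, k < k0 ∧ reorder p k = n) → g n = 0 := by
    rintro n hn ⟨k, hk, rfl⟩
    exact hgz _ hn (hprev k hk hn)
  have key : ∃ r : ℕ, r < 4 * p + 2 ∧ G1row p g r = g j ∧ G2row p g r = 0 ∧ G3row p g r = 0 := by
    rcases Nat.lt_or_ge k0 p with hA | hBC
    · have hj' : j = 3 * k0 := by rw [hj]; unfold reorder; split_ifs <;> omega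
      rcases Nat.eq_zero_or_pos k0 with h0 | h0
      · subst h0
        refine ⟨0, by omega, ?_, ?_, ?_⟩
        · unfold G1row; split_ifs <;> first | (exact congrArg g (by omega)) | omega
        · unfold G2row; split_ifs <;> first | rfl | omega
        · unfold G3row; split_ifs <;> first | rfl | omega
      · refine ⟨3 * k0, by omega, ?_, ?_, ?_⟩
        · unfold G1row; split_ifs <;> first | (exact congrArg g (by omega)) | omega
        · have he : G2row p g (3 * k0) = g (3 * (k0 - 1)) := by
            unfold G2row; split_ifs <;> first | (exact congrArg g (by omega)) | omega
          rw [he]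
          exact hz _ (by omega) ⟨k0 - 1, by omega, by unfold reorder; split_ifs <;> omega⟩
        · unfold G3row; split_ifs <;> first | rfl | omega
    · rcases Nat.lt_or_ge k0 (2 * p) with hB | hC
      · have hj' : j = 3 * p - 1 - 3 * (k0 - p) := by
          rw [hj]; unfold reorder; split_ifs <;> omega
        rcases Nat.eq_or_lt_of_le hBC with h0 | h0
        · refine ⟨3 * p + 2, by omega, ?_, ?_, ?_⟩
          · unfold G1row; split_ifs <;> first | (exact congrArg g (by omega)) | omega
          · unfold G2row; split_ifs <;> first | rfl | omega
          · have he : G3row p g (3 * p + 2) = g 0 := by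
              unfold G3row; split_ifs <;> first | (exact congrArg g (by omega)) | omega
            rw [he]
            exact hz _ (by omega) ⟨0, by omega, by unfold reorder; split_ifs <;> omega⟩
        · refine ⟨j + 3, by omega, ?_, ?_, ?_⟩
          · unfold G1row; split_ifs <;> first | (exact congrArg g (by omega)) | omega
          · unfold G2row; split_ifs <;> first | rfl | omega
          · have he : G3row p g (j + 3) = g (j + 3) := by
              unfold G3row; split_ifs <;> first | (exact congrArg g (by omega)) | omega
            rw [he]
            exact hz _ (by omega) ⟨k0 - 1, by omega, by unfold reorder; split_ifs <;> omega⟩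
      · have hj' : j = 3 * (k0 - 2 * p) + 1 := by
          rw [hj]; unfold reorder; split_ifs <;> omega
        rcases Nat.eq_or_lt_of_le hC with h0 | h0
        · refine ⟨3 * p, by omega, ?_, ?_, ?_⟩
          · unfold G1row; split_ifs <;> first | (exact congrArg g (by omega)) | omega
          · have he : G2row p g (3 * p) = g (3 * p - 3) := by
              unfold G2row; split_ifs <;> first | (exact congrArg g (by omega)) | omega
            rw [he]
            exact hz _ (by omega) ⟨p - 1, by omega, by unfold reorder; split_ifs <;> omega⟩
          · unfold G3row; split_ifs <;> first | rfl | omega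
        · refine ⟨3 * p + (k0 - 2 * p) + 2, by omega, ?_, ?_, ?_⟩
          · unfold G1row; split_ifs <;> first | (exact congrArg g (by omega)) | omega
          · have he : G2row p g (3 * p + (k0 - 2 * p) + 2) = g (3 * (k0 - 2 * p) + 2) := by
              unfold G2row; split_ifs <;> first | (exact congrArg g (by omega)) | omega
            rw [he]
            exact hz _ (by omega)
              ⟨2 * p - 1 - (k0 - 2 * p), by omega, by unfold reorder; split_ifs <;> omega⟩
          · have he : G3row p g (3 * p + (k0 - 2 * p) + 2) = g (3 * (k0 - 2 * p)) := by
              unfold G3row; split_ifs <;> first | (exact congrArg g (by omega)) | omega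
            rw [he]
            exact hz _ (by omega) ⟨k0 - 2 * p, by omega, by unfold reorder; split_ifs <;> omega⟩
  obtain ⟨r, hrlt, h1, h2, h3⟩ := key
  refine ⟨⟨r, hrlt, h1, h2, h3⟩, ?_⟩
  intro m hmem
  have hS : ((Set.range fun c : Fin (3 * p) => fun t : Fin (4 * p + 2) => G2row p g t c) ∪
      (Set.range fun c : Fin (3 * p) => fun t : Fin (4 * p + 2) => G3row p g t c)) ⊆
      (LinearMap.ker (LinearMap.proj (⟨r, hrlt⟩ : Fin (4 * p + 2)) :
        ((Fin (4 * p + 2) → ℂ) →ₗ[ℂ] ℂ)) : Set ((Fin (4 * p + 2) → ℂ))) := by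
    rintro s (⟨c, rfl⟩ | ⟨c, rfl⟩) <;>
      simp [LinearMap.mem_ker, LinearMap.proj_apply, h2, h3]
  have h0 := Submodule.span_le.mpr hS hmem
  simp only [SetLike.mem_coe, LinearMap.mem_ker, LinearMap.proj_apply] at h0
  rw [h1, hg j, dif_pos hjlt] at h0
  exact mul_ne_zero hjne (hΘ _ _) h0
end

section
/- Let h ∈ ℂ⁵ be nonzero and Θ a 5×5 matrix all of whose entries are nonzero. Define the 6×5 matrices G₁ = [diag(h)Θ ; 0_{1×5}] and G₂ = [0_{1×5} ; diag(h)Θ]. Then the 6×10 matrix [G₁ G₂] has the property that G₁ and G₂ are linearly independent vector groups: no column of G₁ is in the span of the columns of G₂ and vice versa. -/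
theorem stmt_18 (h : Fin 5 → ℂ) (hh : h ≠ 0)
    (Θ : Matrix (Fin 5) (Fin 5) ℂ) (hΘ : ∀ i j, Θ i j ≠ 0)
    (G1 G2 : Matrix (Fin 6) (Fin 5) ℂ)
    (hG1 : ∀ (t : Fin 6) (j : Fin 5),
      G1 t j = if ht : (t : ℕ) < 5 then h ⟨t, ht⟩ * Θ ⟨t, ht⟩ j else 0)
    (hG2 : ∀ (t : Fin 6) (j : Fin 5),
      G2 t j = if ht : 0 < (t : ℕ)
        then h ⟨(t : ℕ) - 1, by have := t.isLt; omega⟩ *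
             Θ ⟨(t : ℕ) - 1, by have := t.isLt; omega⟩ j else 0) :
    (∀ m : Fin 5, (fun t => G1 t m) ∉
      Submodule.span ℂ (Set.range fun j : Fin 5 => fun t => G2 t j)) ∧
    (∀ m : Fin 5, (fun t => G2 t m) ∉
      Submodule.span ℂ (Set.range fun j : Fin 5 => fun t => G1 t j)) := by
  obtain ⟨k, hk0⟩ := Function.ne_iff.mp hh
  have hk : h k ≠ 0 := by simpa using hk0
  constructor
  · intro m hm
    rw [Submodule.mem_span_range_iff_exists_fun] at hm
    obtain ⟨c, hc⟩ := hm
    obtain ⟨i, hi, hmin⟩ := Finset.exists_min_image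
      (Finset.univ.filter (fun i => h i ≠ 0)) id ⟨k, by simp [hk]⟩
    simp only [Finset.mem_filter, Finset.mem_univ, true_and, id] at hi hmin
    have hzero : ∀ j : Fin 5, j < i → h j = 0 := by
      intro j hj
      by_contra hne
      exact absurd (hmin j (by simpa using hne)) (not_le.mpr hj)
    have key := congrFun hc ⟨(i : ℕ), by omega⟩
    simp only [Finset.sum_apply, Pi.smul_apply, smul_eq_mul, hG1, hG2] at key
    have hlhs : (∑ j : Fin 5, c j *
        (if ht : 0 < ((⟨(i : ℕ), by omega⟩ : Fin 6) : ℕ)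
          then h ⟨((⟨(i : ℕ), by omega⟩ : Fin 6) : ℕ) - 1, by omega⟩ *
               Θ ⟨((⟨(i : ℕ), by omega⟩ : Fin 6) : ℕ) - 1, by omega⟩ j else 0)) = 0 := by
      apply Finset.sum_eq_zero
      intro j _
      by_cases h0 : 0 < (i : ℕ)
      · have : h ⟨(i : ℕ) - 1, by omega⟩ = 0 := by
          apply hzero
          simp only [Fin.lt_def]
          omega
        simp [h0, this]
      · simp [h0]
    rw [hlhs] at key
    have hrhs : (if ht : ((⟨(i : ℕ), by omega⟩ : Fin 6) : ℕ) < 5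
        then h ⟨((⟨(i : ℕ), by omega⟩ : Fin 6) : ℕ), ht⟩ *
             Θ ⟨((⟨(i : ℕ), by omega⟩ : Fin 6) : ℕ), ht⟩ m else 0)
        = h i * Θ i m := by
      rw [dif_pos (by simp)]
    rw [hrhs] at key
    exact mul_ne_zero hi (hΘ i m) key.symm
  · intro m hm
    rw [Submodule.mem_span_range_iff_exists_fun] at hm
    obtain ⟨c, hc⟩ := hm
    obtain ⟨i, hi, hmax⟩ := Finset.exists_max_image
      (Finset.univ.filter (fun i => h i ≠ 0)) id ⟨k, by simp [hk]⟩
    simp only [Finset.mem_filter, Finset.mem_univ, true_and, id] at hi hmax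
    have hzero : ∀ j : Fin 5, i < j → h j = 0 := by
      intro j hj
      by_contra hne
      exact absurd (hmax j (by simpa using hne)) (not_le.mpr hj)
    have key := congrFun hc ⟨(i : ℕ) + 1, by omega⟩
    simp only [Finset.sum_apply, Pi.smul_apply, smul_eq_mul, hG1, hG2] at key
    have hlhs : (∑ j : Fin 5, c j *
        (if ht : ((⟨(i : ℕ) + 1, by omega⟩ : Fin 6) : ℕ) < 5
          then h ⟨((⟨(i : ℕ) + 1, by omega⟩ : Fin 6) : ℕ), ht⟩ *
               Θ ⟨((⟨(i : ℕ) + 1, by omega⟩ : Fin 6) : ℕ), ht⟩ j else 0)) = 0 := by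
      apply Finset.sum_eq_zero
      intro j _
      by_cases h5 : (i : ℕ) + 1 < 5
      · have : h ⟨(i : ℕ) + 1, h5⟩ = 0 := by
          apply hzero
          simp only [Fin.lt_def]
          omega
        simp [h5, this]
      · simp [h5]
    rw [hlhs] at key
    have hrhs : (if ht : 0 < ((⟨(i : ℕ) + 1, by omega⟩ : Fin 6) : ℕ)
        then h ⟨((⟨(i : ℕ) + 1, by omega⟩ : Fin 6) : ℕ) - 1, by omega⟩ *
             Θ ⟨((⟨(i : ℕ) + 1, by omega⟩ : Fin 6) : ℕ) - 1, by omega⟩ m else 0)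
        = h i * Θ i m := by
      rw [dif_pos (by simp)]
      simp
    rw [hrhs] at key
    exact mul_ne_zero hi (hΘ i m) key.symm
end
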